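/- If a regular multisegment m is of type 4231 or of type 3412, then m does not satisfy condition (GLS). -/

import Mathlib

/-! ## Segments and multisegments -/

structure Segment where
  a : ℤ
  b : ℤ
  nonempty : a ≤ b

namespace Segment

/-- `Δ ≺ Δ'`. -/
def prec (Δ Δ' : Segment) : Prop :=
  Δ.a < Δ'.a ∧ Δ'.a ≤ Δ.b + 1 ∧ Δ.b < Δ'.b

def linked (Δ Δ' : Segment) : Prop := prec Δ Δ' ∨ prec Δ' Δ

/-- `←Δ = [a-1, b-1]`. -/
def shiftl (Δ : Segment) : Segment :=
  ⟨Δ.a - 1, Δ.b - 1, by have := Δ.nonempty; omega⟩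

end Segment

abbrev Multisegment := Multiset Segment

/-- `Step m n` means `m ⊢ n`: `m` is obtained from `n` by replacing a pair of linked
segments of `n` by its offspring. -/
def Step (m n : Multisegment) : Prop :=
  ∃ (Δ Δ' : Segment) (r : Multisegment),
    Segment.prec Δ Δ' ∧ n = Δ ::ₘ Δ' ::ₘ r ∧
    ((Δ'.a ≤ Δ.b ∧ ∃ E F : Segment,
        E.a = Δ.a ∧ E.b = Δ'.b ∧ F.a = Δ'.a ∧ F.b = Δ.b ∧ m = E ::ₘ F ::ₘ r) ∨
     (Δ'.a = Δ.b + 1 ∧ ∃ E : Segment, E.a = Δ.a ∧ E.b = Δ'.b ∧ m = E ::ₘ r))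

/-- `Obt m n` means `m ⊨ n`: reflexive-transitive closure of `⊢`. -/
def Obt : Multisegment → Multisegment → Prop := Relation.ReflTransGen Step

def PairwiseUnlinked (m : Multisegment) : Prop :=
  ∀ (Δ Δ' : Segment) (r : Multisegment), m = Δ ::ₘ Δ' ::ₘ r → ¬ Segment.linked Δ Δ'

/-- `StepN l m n` : there is a chain of `l` steps `m = m_l ⊢ m_{l-1} ⊢ ⋯ ⊢ m_1 ⊢ n`. -/
def StepN : ℕ → Multisegment → Multisegment → Prop
  | 0, m, n => m = n
  | l + 1, m, n => ∃ p, Step m p ∧ StepN l p n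

/-- The complexity `c(m)`: the maximal `l` for which there is a chain of `l` steps ending at `m`. -/
noncomputable def complexity (m : Multisegment) : ℕ :=
  sSup {l : ℕ | ∃ m', StepN l m' m}

/-- Almost pairwise unlinked. -/
def APU (m : Multisegment) : Prop :=
  ∃ m', PairwiseUnlinked m' ∧ Step m' m

/-- The depth `d(m)`: the number of APU multisegments `n` with `n ⊨ m`. -/
noncomputable def depth (m : Multisegment) : ℕ :=
  {n : Multisegment | APU n ∧ Obt n m}.ncard

def Regular (m : Multisegment) : Prop :=
  (m.map Segment.a).Nodup ∧ (m.map Segment.b).Nodup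

def IsBalanced (m : Multisegment) : Prop :=
  Regular m ∧ depth m = complexity m

/-! ## Enumerated multisegments and the (GLS) condition -/

/-- The multisegment `Δ_0 + ⋯ + Δ_{k-1}` attached to an enumeration `Δ : ℕ → Segment`. -/
def msOf (k : ℕ) (Δ : ℕ → Segment) : Multisegment :=
  ↑((List.range k).map Δ)

def Xset (k : ℕ) (Δ : ℕ → Segment) : Set (ℕ × ℕ) :=
  {p | p.1 < k ∧ p.2 < k ∧ (Δ p.1).prec (Δ p.2)}

def Xtil (k : ℕ) (Δ : ℕ → Segment) : Set (ℕ × ℕ) :=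
  {p | p.1 < k ∧ p.2 < k ∧ ((Δ p.1).shiftl).prec (Δ p.2)}

open Classical in
/-- The vector `x_{i,j}(λ) ∈ ℂ^{X̃_m}` (viewed inside the functions `ℕ × ℕ → ℂ`). -/
noncomputable def glsVec (k : ℕ) (Δ : ℕ → Segment) (lam : ℕ → ℕ → ℂ) (i j : ℕ) :
    ℕ × ℕ → ℂ := fun p =>
  (if p.1 = i ∧ (p.2, j) ∈ Xset k Δ ∧ (i, p.2) ∈ Xtil k Δ then lam p.2 j else 0) -
  (if p.2 = j ∧ (p.1, j) ∈ Xtil k Δ ∧ (i, p.1) ∈ Xset k Δ then lam i p.1 else 0)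

/-- Condition (GLS). -/
def GLS (k : ℕ) (Δ : ℕ → Segment) : Prop :=
  ∃ lam : ℕ → ℕ → ℂ,
    LinearIndependent ℂ (fun p : Xset k Δ => glsVec k Δ lam p.1.1 p.1.2)

/-- The relation `⤳` between `X_m` and `X̃_m`. -/
def leadsTo (Δ : ℕ → Segment) (x y : ℕ × ℕ) : Prop :=
  (x.1 = y.1 ∧ (Δ y.2).prec (Δ x.2)) ∨ (x.2 = y.2 ∧ (Δ x.1).prec (Δ y.1))

/-- `N_{i,j} = {y ∈ X̃_m : (i,j) ⤳ y}`. -/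
def Nset (k : ℕ) (Δ : ℕ → Segment) (x : ℕ × ℕ) : Set (ℕ × ℕ) :=
  {y ∈ Xtil k Δ | leadsTo Δ x y}

/-- The labelled relation `x ⤳^r y`. -/
def LabRel (k : ℕ) (Δ : ℕ → Segment) (x r y : ℕ × ℕ) : Prop :=
  (x.1 = y.1 ∧ r = (y.2, x.2) ∧ x ∈ Xset k Δ ∧ r ∈ Xset k Δ ∧ y ∈ Xtil k Δ) ∨
  (x.2 = y.2 ∧ r = (x.1, y.1) ∧ x ∈ Xset k Δ ∧ r ∈ Xset k Δ ∧ y ∈ Xtil k Δ)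

/-- Multisegments of type 4231. -/
def Type4231 (m : Multisegment) : Prop :=
  ∃ (k : ℕ) (Δ : ℕ → Segment), 4 ≤ k ∧ m = msOf k Δ ∧ Regular m ∧
    (∀ i j, i < j → j < k → (Δ j).b < (Δ i).b) ∧
    (∀ i, 2 ≤ i → i + 1 < k → (Δ (i + 1)).prec (Δ i)) ∧
    (Δ 2).prec (Δ 0) ∧
    (Δ (k - 1)).a < (Δ 1).a ∧ (Δ 1).a < (Δ (k - 2)).a

/-- Multisegments of type 3412. -/
def Type3412 (m : Multisegment) : Prop :=
  ∃ (k : ℕ) (Δ : ℕ → Segment), 4 ≤ k ∧ m = msOf k Δ ∧ Regular m ∧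
    (∀ i j, i < j → j < k → (Δ j).b < (Δ i).b) ∧
    (∀ i, 3 ≤ i → i + 1 < k → (Δ (i + 1)).prec (Δ i)) ∧
    (Δ 3).prec (Δ 1) ∧
    (Δ 2).a < (Δ (k - 1)).a ∧ (Δ (k - 1)).a < (Δ 0).a ∧
    (Δ 0).a < (Δ (if k = 4 then 1 else k - 2)).a

/-- `Δ_i` is a detachable segment of `Δ_0 + ⋯ + Δ_{k-1}`. -/
def Detachable (k : ℕ) (Δ : ℕ → Segment) (i : ℕ) : Prop :=
  (∀ j, j < k → j ≠ i → ¬ (Δ i).prec (Δ j) ∧ ¬ ((Δ i).shiftl).prec (Δ j)) ∨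
  (∀ j, j < k → j ≠ i → ¬ (Δ j).prec (Δ i) ∧ ¬ ((Δ j).shiftl).prec (Δ i))

/-! ## Permutations, Bruhat order, smooth pairs -/

/-- The rank function `r_σ(i,j)` (0-based). -/
def rankFn {k : ℕ} (σ : Equiv.Perm (Fin k)) (i j : Fin k) : ℕ :=
  (Finset.univ.filter fun u : Fin k => u ≤ i ∧ σ u ≤ j).card

/-- The Bruhat order, via the rank-function characterization. -/
def BruhatLE {k : ℕ} (τ σ : Equiv.Perm (Fin k)) : Prop :=
  ∀ i j : Fin k, rankFn σ i j ≤ rankFn τ i j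

/-- The length `ℓ(σ)`. -/
def lenPerm {k : ℕ} (σ : Equiv.Perm (Fin k)) : ℕ :=
  (Finset.univ.filter fun p : Fin k × Fin k => p.1 < p.2 ∧ σ p.2 < σ p.1).card

def IsTransposition {k : ℕ} (t : Equiv.Perm (Fin k)) : Prop :=
  ∃ i j : Fin k, i ≠ j ∧ t = Equiv.swap i j

/-- `(σ, σ0)` is a smooth pair. -/
def SmoothPair {k : ℕ} (σ0 σ : Equiv.Perm (Fin k)) : Prop :=
  BruhatLE σ0 σ ∧
    {t : Equiv.Perm (Fin k) | IsTransposition t ∧ BruhatLE (σ0 * t) σ}.ncard = lenPerm σ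

/-- The ascent set `D(σ)` of a permutation, in 1-based indexing. -/
def Dset {k : ℕ} (σ : Equiv.Perm (Fin k)) : Set ℕ :=
  {i | ∃ (h1 : 1 ≤ i) (h2 : i < k), (σ ⟨i - 1, by omega⟩ : ℕ) < (σ ⟨i, h2⟩ : ℕ)} ∪ {k}

/-- The flattened permutation `rmv_i(σ)`. -/
def rmv {k : ℕ} (σ : Equiv.Perm (Fin (k + 1))) (i : Fin (k + 1)) : Equiv.Perm (Fin k) :=
  ((finSuccAboveEquiv i).trans
    (σ.subtypeEquiv fun x => not_congr (EmbeddingLike.apply_eq_iff_eq σ).symm)).trans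
    (finSuccAboveEquiv (σ i)).symm

/-! ## Bi-sequences -/

structure BiSeq (k : ℕ) where
  a : Fin k → ℤ
  b : Fin k → ℤ
  mono_a : Monotone a
  anti_b : Antitone b
  compat : ∀ i : Fin k, a i.rev ≤ b i + 1

def RegularBS {k : ℕ} (A : BiSeq k) : Prop := StrictMono A.a ∧ StrictAnti A.b

/-- `σ` satisfies the defining recursion of `σ0(A)`. -/
def Sigma0Spec {k : ℕ} (A : BiSeq k) (σ : Equiv.Perm (Fin k)) : Prop :=
  ∀ i : Fin k,
    A.a (σ.symm i) ≤ A.b i + 1 ∧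
    ∀ j : Fin k, A.a j ≤ A.b i + 1 → (∀ i' : Fin k, i < i' → σ.symm i' ≠ j) →
      j ≤ σ.symm i

def Avoids213 {k : ℕ} (σ : Equiv.Perm (Fin k)) : Prop :=
  ¬ ∃ i j l : Fin k, i < j ∧ j < l ∧ σ j < σ i ∧ σ i < σ l

/-- The multisegment `m_σ(A)`, consisting of the nonempty intervals among
`[a_{σ⁻¹(i)}, b_i]`. -/
def mOf {k : ℕ} (A : BiSeq k) (σ : Equiv.Perm (Fin k)) : Multisegment :=
  ((Finset.univ.filter fun i : Fin k => A.a (σ.symm i) ≤ A.b i).attach.val).map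
    fun i => { a := A.a (σ.symm i.1), b := A.b i.1,
               nonempty := by have := Finset.mem_filter.mp i.2; exact this.2 }

/-! ## Permutation matrices -/

def PermMat {k : ℕ} (σ : Equiv.Perm (Fin k)) : Matrix (Fin k) (Fin k) ℕ :=
  fun i j => if σ i = j then 1 else 0

/-- The equivalence relation generated by `i ∼ j` whenever `M_{i,l} = M_{j,l} = 1` for some `l`. -/
def matRel {k : ℕ} (M : Matrix (Fin k) (Fin k) ℕ) : Fin k → Fin k → Prop :=
  Relation.EqvGen (fun i j => ∃ l, M i l = 1 ∧ M j l = 1)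

/-! ### Auxiliary lemmas -/

lemma Segment.prec_irrefl (D : Segment) : ¬ D.prec D := fun h => lt_irrefl _ h.1

lemma Segment.shiftl_prec_self (D : Segment) : D.shiftl.prec D := by
  have := D.nonempty
  refine ⟨?_, ?_, ?_⟩ <;> simp [Segment.shiftl, Segment.prec] <;> omega

lemma sum_Ico_tele {M : Type*} [AddCommGroup M] (G : ℕ → M) (a b : ℕ) (h : a ≤ b) :
    ∑ t ∈ Finset.Ico a b, (G (t+1) - G t) = G b - G a := by
  induction b, h using Nat.le_induction with
  | base => simp
  | succ b hb ih => rw [Finset.sum_Ico_succ_top (by omega), ih]; abel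

/-- Indicator of the diagonal point `(i,i)`. -/
noncomputable def dvec (i : ℕ) : ℕ × ℕ → ℂ := fun p => if p = (i, i) then 1 else 0

lemma glsVec_pure (k : ℕ) (Δ : ℕ → Segment) (lam : ℕ → ℕ → ℂ) (i j : ℕ)
    (hik : i < k) (hjk : j < k) (hij : (Δ i).prec (Δ j)) (hne : i ≠ j)
    (hB : ∀ r, r < k → r ≠ i → ¬((Δ r).prec (Δ j) ∧ (Δ i).shiftl.prec (Δ r)))
    (hC : ∀ s, s < k → s ≠ j → ¬((Δ s).shiftl.prec (Δ j) ∧ (Δ i).prec (Δ s))) :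
    glsVec k Δ lam i j = lam i j • (dvec i - dvec j) := by
  classical
  funext p
  obtain ⟨u, v⟩ := p
  have hC1 : (u = i ∧ (v, j) ∈ Xset k Δ ∧ (i, v) ∈ Xtil k Δ) ↔ (u = i ∧ v = i) := by
    constructor
    · rintro ⟨rfl, hx, hxt⟩
      refine ⟨rfl, ?_⟩
      by_contra hvi
      exact hB v hx.1 hvi ⟨hx.2.2, hxt.2.2⟩
    · rintro ⟨rfl, rfl⟩
      exact ⟨rfl, ⟨hik, hjk, hij⟩, ⟨hik, hik, Segment.shiftl_prec_self _⟩⟩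
  have hC2 : (v = j ∧ (u, j) ∈ Xtil k Δ ∧ (i, u) ∈ Xset k Δ) ↔ (u = j ∧ v = j) := by
    constructor
    · rintro ⟨rfl, hxt, hx⟩
      refine ⟨?_, rfl⟩
      by_contra huj
      exact hC u hxt.1 huj ⟨hxt.2.2, hx.2.2⟩
    · rintro ⟨rfl, rfl⟩
      exact ⟨rfl, ⟨hjk, hjk, Segment.shiftl_prec_self _⟩, ⟨hik, hjk, hij⟩⟩
  show (if u = i ∧ (v, j) ∈ Xset k Δ ∧ (i, v) ∈ Xtil k Δ then lam v j else 0) -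
      (if v = j ∧ (u, j) ∈ Xtil k Δ ∧ (i, u) ∈ Xset k Δ then lam i u else 0) =
      lam i j * ((if ((u,v) : ℕ × ℕ) = (i, i) then (1:ℂ) else 0) -
        (if ((u,v) : ℕ × ℕ) = (j, j) then (1:ℂ) else 0))
  rw [if_congr hC1 rfl rfl, if_congr hC2 rfl rfl]
  simp only [Prod.mk.injEq]
  by_cases h1 : u = i ∧ v = i
  · have h2 : ¬(u = j ∧ v = j) := fun h => hne (h1.1.symm.trans h.1)
    rw [if_pos h1, if_neg h2, if_pos h1, if_neg h2, h1.2]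
    ring
  · by_cases h2 : u = j ∧ v = j
    · rw [if_neg h1, if_pos h2, if_neg h1, if_pos h2, h2.1]
      ring
    · rw [if_neg h1, if_neg h2, if_neg h1, if_neg h2]
      ring

/-- Main engine: a size-`k` "cycle" of edges whose `glsVec`s are pure diagonal
differences forces linear dependence. -/
lemma not_gls_of_cycle (k : ℕ) (Δ Δ' : ℕ → Segment) (σ : ℕ → ℕ) (hk : 0 < k)
    (hσ : ∀ t, t < k → σ t < k)
    (hΔσ : ∀ t, t < k → Δ (σ t) = Δ' t)
    (hΔinj : ∀ s t, s < k → t < k → Δ s = Δ t → s = t)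
    (hΔ'inj : ∀ s t, s < k → t < k → Δ' s = Δ' t → s = t)
    (hsurj : ∀ r, r < k → ∃ r', r' < k ∧ Δ' r' = Δ r)
    (E : ℕ → ℕ × ℕ) (ε : ℕ → ℂ)
    (hElt : ∀ t, t < k → (E t).1 < k ∧ (E t).2 < k)
    (hEinj : ∀ s t, s < k → t < k → E s = E t → s = t)
    (hmem : ∀ t, t < k → (Δ' (E t).1).prec (Δ' (E t).2))
    (hε : ∀ t, t < k → ε t ≠ 0)
    (hB' : ∀ t, t < k → ∀ r', r' < k → r' ≠ (E t).1 →
      ¬((Δ' r').prec (Δ' (E t).2) ∧ (Δ' (E t).1).shiftl.prec (Δ' r')))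
    (hC' : ∀ t, t < k → ∀ s', s' < k → s' ≠ (E t).2 →
      ¬((Δ' s').shiftl.prec (Δ' (E t).2) ∧ (Δ' (E t).1).prec (Δ' s')))
    (hsum : ∀ G : ℕ → (ℕ × ℕ → ℂ),
      ∑ t ∈ Finset.range k, ε t • (G (E t).1 - G (E t).2) = 0) :
    ¬ GLS k Δ := by
  rintro ⟨lam, hli⟩
  -- the edges, in Δ-world
  have hEne : ∀ t, t < k → (E t).1 ≠ (E t).2 := by
    intro t ht h
    exact Segment.prec_irrefl _ (h ▸ hmem t ht)
  have hmemX : ∀ t : Fin k, (σ (E t).1, σ (E t).2) ∈ Xset k Δ := by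
    intro t
    have h1 := (hElt t t.2).1
    have h2 := (hElt t t.2).2
    exact ⟨hσ _ h1, hσ _ h2, by
      simp only [hΔσ _ h1, hΔσ _ h2]; exact hmem t t.2⟩
  set ι : Fin k → ↥(Xset k Δ) := fun t => ⟨(σ (E t).1, σ (E t).2), hmemX t⟩ with hι
  have hσinj : ∀ s t, s < k → t < k → σ s = σ t → s = t := by
    intro s t hs ht h
    apply hΔ'inj s t hs ht
    rw [← hΔσ s hs, ← hΔσ t ht, h]
  have hιinj : Function.Injective ι := by
    intro s t h
    simp only [hι, Subtype.mk.injEq, Prod.mk.injEq] at h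
    have h1 := hσinj _ _ (hElt s s.2).1 (hElt t t.2).1 h.1
    have h2 := hσinj _ _ (hElt s s.2).2 (hElt t t.2).2 h.2
    have := hEinj s t s.2 t.2 (Prod.ext h1 h2)
    exact Fin.ext this
  have hli2 := hli.comp ι hιinj
  -- purity of each edge vector
  have hpure : ∀ t : Fin k,
      glsVec k Δ lam (σ (E t).1) (σ (E t).2) =
        lam (σ (E t).1) (σ (E t).2) • (dvec (σ (E t).1) - dvec (σ (E t).2)) := by
    intro t
    have he1 := (hElt t t.2).1
    have he2 := (hElt t t.2).2
    apply glsVec_pure k Δ lam _ _ (hσ _ he1) (hσ _ he2)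
    · simp only [hΔσ _ he1, hΔσ _ he2]; exact hmem t t.2
    · intro h
      exact hEne t t.2 (hσinj _ _ he1 he2 h ▸ rfl)
    · intro r hr hrne ⟨hp1, hp2⟩
      obtain ⟨r', hr', hΔr'⟩ := hsurj r hr
      have hr'ne : r' ≠ (E t).1 := by
        intro h
        apply hrne
        apply hΔinj r (σ (E t).1) hr (hσ _ he1)
        rw [← hΔr', h, hΔσ _ he1]
      exact hB' t t.2 r' hr' hr'ne
        ⟨by rw [hΔr', ← hΔσ _ he2]; exact hp1, by rw [hΔr', ← hΔσ _ he1]; exact hp2⟩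
    · intro s hs hsne ⟨hp1, hp2⟩
      obtain ⟨s', hs', hΔs'⟩ := hsurj s hs
      have hs'ne : s' ≠ (E t).2 := by
        intro h
        apply hsne
        apply hΔinj s (σ (E t).2) hs (hσ _ he2)
        rw [← hΔs', h, hΔσ _ he2]
      exact hC' t t.2 s' hs' hs'ne
        ⟨by rw [hΔs', ← hΔσ _ he2]; exact hp1, by rw [hΔs', ← hΔσ _ he1]; exact hp2⟩
  by_cases hz : ∃ t : Fin k, lam (σ (E t).1) (σ (E t).2) = 0
  · obtain ⟨t, htz⟩ := hz
    apply hli2.ne_zero t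
    show glsVec k Δ lam (σ (E t).1) (σ (E t).2) = 0
    rw [hpure t, htz, zero_smul]
  · push_neg at hz
    have hdep := Fintype.linearIndependent_iff.mp hli2
      (fun t => ε t * (lam (σ (E t).1) (σ (E t).2))⁻¹)
    have hzero : ∑ t : Fin k, (ε t * (lam (σ (E t).1) (σ (E t).2))⁻¹) •
        ((fun p : ↥(Xset k Δ) => glsVec k Δ lam p.1.1 p.1.2) ∘ ι) t = 0 := by
      have : ∀ t : Fin k, (ε t * (lam (σ (E t).1) (σ (E t).2))⁻¹) •
          ((fun p : ↥(Xset k Δ) => glsVec k Δ lam p.1.1 p.1.2) ∘ ι) t =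
          ε t • ((fun v => dvec (σ v)) (E t).1 - (fun v => dvec (σ v)) (E t).2) := by
        intro t
        show (ε t * (lam (σ (E t).1) (σ (E t).2))⁻¹) •
          glsVec k Δ lam (σ (E t).1) (σ (E t).2) = _
        rw [hpure t, smul_smul, mul_assoc, inv_mul_cancel₀ (hz t), mul_one]
      rw [Finset.sum_congr rfl (fun t _ => this t)]
      rw [← Finset.sum_range (fun t => ε t • ((fun v => dvec (σ v)) (E t).1 -
        (fun v => dvec (σ v)) (E t).2))]
      exact hsum (fun v => dvec (σ v))
    have := hdep hzero ⟨0, hk⟩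
    exact hε 0 hk (by
      have hl := hz ⟨0, hk⟩
      field_simp at this
      simpa using this)

lemma not_gls_4231_case (k : ℕ) (Δ Δ' : ℕ → Segment) (σ : ℕ → ℕ) (hk : 4 ≤ k)
    (hσ : ∀ t, t < k → σ t < k)
    (hΔσ : ∀ t, t < k → Δ (σ t) = Δ' t)
    (hΔinj : ∀ s t, s < k → t < k → Δ s = Δ t → s = t)
    (hΔ'inj : ∀ s t, s < k → t < k → Δ' s = Δ' t → s = t)
    (hsurj : ∀ r, r < k → ∃ r', r' < k ∧ Δ' r' = Δ r)
    (hb : ∀ i j, i < j → j < k → (Δ' j).b < (Δ' i).b)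
    (hchain : ∀ i, 2 ≤ i → i + 1 < k → (Δ' (i + 1)).prec (Δ' i))
    (h20 : (Δ' 2).prec (Δ' 0))
    (ha1 : (Δ' (k - 1)).a < (Δ' 1).a) (ha2 : (Δ' 1).a < (Δ' (k - 2)).a) :
    ¬ GLS k Δ := by
  have Mono : ∀ j, j < k → ∀ i, 2 ≤ i → i ≤ j → (Δ' j).a ≤ (Δ' i).a := by
    intro j
    induction j with
    | zero => intro _ i hi hij; omega
    | succ n ih =>
      intro hn i hi hij
      rcases Nat.lt_or_ge i (n + 1) with h | h
      · have h1 : (Δ' (n + 1)).a < (Δ' n).a := (hchain n (by omega) hn).1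
        have h2 := ih (by omega) i hi (by omega)
        omega
      · have : i = n + 1 := by omega
        subst this; exact le_refl _
  have Dord : ∀ r, r < k → r ≠ 1 → r ≠ k - 1 → (Δ' 1).a < (Δ' r).a := by
    intro r hr h1 h2
    rcases eq_or_ne r 0 with rfl | h0
    · have hm := Mono (k - 2) (by omega) 2 (by omega) (by omega)
      have := h20.1
      omega
    · have hm := Mono (k - 2) (by omega) r (by omega) (by omega)
      omega
  have m10 : (Δ' 1).prec (Δ' 0) := by
    have h1 := Dord 0 (by omega) (by omega) (by omega)
    have h2 := h20.2.1
    have h3 := hb 1 2 (by omega) (by omega)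
    have h4 := hb 0 1 (by omega) (by omega)
    exact ⟨h1, by omega, h4⟩
  have mk11 : (Δ' (k - 1)).prec (Δ' 1) := by
    have h1 := (hchain (k - 2) (by omega) (by omega)).2.1
    rw [show k - 2 + 1 = k - 1 by omega] at h1
    have h2 := hb 1 (k - 1) (by omega) (by omega)
    exact ⟨ha1, by omega, h2⟩
  refine not_gls_of_cycle k Δ Δ' σ (by omega) hσ hΔσ hΔinj hΔ'inj hsurj
    (fun t => if t = 0 then (1, 0) else if t = 1 then (2, 0)
      else if t = k - 1 then (k - 1, 1) else (t + 1, t))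
    (fun t => if t = 0 then 1 else if t = 1 then -1 else if t = k - 1 then 1 else -1)
    ?_ ?_ ?_ ?_ ?_ ?_ ?_
  · -- hElt
    intro t ht
    beta_reduce
    split_ifs <;> (try simp) <;> omega
  · -- hEinj
    intro s t hs ht h
    beta_reduce at h
    split_ifs at h <;> simp only [Prod.mk.injEq] at h <;> omega
  · -- hmem
    intro t ht
    beta_reduce
    split_ifs with h0 h1 h2
    · exact m10
    · exact h20
    · exact mk11
    · exact hchain t (by omega) (by omega)
  · -- hε
    intro t ht
    beta_reduce
    split_ifs <;> norm_num
  · -- hB'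
    intro t ht r' hr' hne h
    obtain ⟨hp1, hp2⟩ := h
    beta_reduce at hne hp1 hp2
    split_ifs at hne hp1 hp2 with h0 h1 h2
    all_goals (
      simp only at hne hp1 hp2
      obtain ⟨q1, q2, q3⟩ := hp1
      obtain ⟨q4, q5, q6⟩ := hp2
      simp only [Segment.shiftl] at q4 q5 q6)
    · -- edge (1,0)
      rcases Nat.lt_or_ge r' 2 with h | h
      · interval_cases r' <;> omega
      · have := hb 1 r' (by omega) hr'; omega
    · -- edge (2,0)
      rcases Nat.lt_or_ge r' 3 with h | h
      · have hd := Dord 2 (by omega) (by omega) (by omega)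
        interval_cases r' <;> omega
      · have := hb 2 r' (by omega) hr'; omega
    · -- edge (k-1,1)
      rcases eq_or_ne r' 1 with rfl | hr1
      · omega
      · have := Dord r' hr' hr1 hne; omega
    · -- chain edge (t+1,t)
      rcases Nat.lt_or_ge r' t with h | h
      · have := hb r' t h (by omega); omega
      · rcases eq_or_ne r' t with rfl | h'
        · omega
        · have hgt : t + 2 ≤ r' := by omega
          have := hb (t + 1) r' (by omega) hr'; omega
  · -- hC'
    intro t ht s' hs' hne h
    obtain ⟨hp1, hp2⟩ := h
    beta_reduce at hne hp1 hp2
    split_ifs at hne hp1 hp2 with h0 h1 h2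
    all_goals (
      simp only at hne hp1 hp2
      obtain ⟨q1, q2, q3⟩ := hp1
      obtain ⟨q4, q5, q6⟩ := hp2
      simp only [Segment.shiftl] at q1 q2 q3)
    · -- edge (1,0)
      rcases Nat.lt_or_ge s' 2 with h | h
      · interval_cases s' <;> omega
      · have := hb 1 s' (by omega) hs'; omega
    · -- edge (2,0)
      rcases Nat.lt_or_ge s' 2 with h | h
      · have hd := Dord 2 (by omega) (by omega) (by omega)
        interval_cases s' <;> omega
      · rcases eq_or_ne s' 2 with rfl | h'
        · omega
        · have := hb 2 s' (by omega) hs'; omega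
    · -- edge (k-1,1)
      rcases eq_or_ne s' (k - 1) with rfl | h'
      · omega
      · have := Dord s' hs' hne h'; omega
    · -- chain edge (t+1,t)
      rcases Nat.lt_or_ge s' t with h | h
      · have := hb s' t h (by omega); omega
      · rcases eq_or_ne s' (t + 1) with rfl | h'
        · omega
        · rcases Nat.lt_or_ge (t + 1) s' with h'' | h''
          · have := hb (t + 1) s' h'' hs'; omega
          · omega
  · -- hsum
    intro G
    beta_reduce
    have hset : Finset.range k =
        insert 0 (insert 1 (insert (k - 1) (Finset.Ico 2 (k - 1)))) := by
      ext x
      simp only [Finset.mem_range, Finset.mem_insert, Finset.mem_Ico]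
      omega
    rw [hset]
    rw [Finset.sum_insert (by simp only [Finset.mem_insert, Finset.mem_Ico]; omega),
      Finset.sum_insert (by simp only [Finset.mem_insert, Finset.mem_Ico]; omega),
      Finset.sum_insert (by simp only [Finset.mem_Ico]; omega)]
    have hchainsum : ∑ t ∈ Finset.Ico 2 (k - 1),
        (if t = 0 then (1:ℂ) else if t = 1 then -1 else if t = k - 1 then 1 else -1) •
          (G (if t = 0 then ((1:ℕ), (0:ℕ)) else if t = 1 then (2, 0)
            else if t = k - 1 then (k - 1, 1) else (t + 1, t)).1 -
           G (if t = 0 then ((1:ℕ), (0:ℕ)) else if t = 1 then (2, 0)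
            else if t = k - 1 then (k - 1, 1) else (t + 1, t)).2) =
        ∑ t ∈ Finset.Ico 2 (k - 1), (-1 : ℂ) • (G (t + 1) - G t) := by
      apply Finset.sum_congr rfl
      intro x hx
      simp only [Finset.mem_Ico] at hx
      rw [if_neg (by omega), if_neg (by omega), if_neg (by omega),
        if_neg (by omega), if_neg (by omega), if_neg (by omega)]
    rw [hchainsum]
    rw [← Finset.smul_sum, sum_Ico_tele G 2 (k - 1) (by omega)]
    have hk1 : ¬(k - 1 = 0) := by omega
    have hk2 : ¬(k - 1 = 1) := by omega
    simp only [if_pos rfl, if_neg hk1, if_neg hk2, if_neg (by omega : ¬(1 = 0)),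
      reduceIte]
    simp only [one_smul, neg_smul, neg_one_smul]
    abel

lemma not_gls_3412_case (k : ℕ) (Δ Δ' : ℕ → Segment) (σ : ℕ → ℕ) (hk : 4 ≤ k)
    (hσ : ∀ t, t < k → σ t < k)
    (hΔσ : ∀ t, t < k → Δ (σ t) = Δ' t)
    (hΔinj : ∀ s t, s < k → t < k → Δ s = Δ t → s = t)
    (hΔ'inj : ∀ s t, s < k → t < k → Δ' s = Δ' t → s = t)
    (hsurj : ∀ r, r < k → ∃ r', r' < k ∧ Δ' r' = Δ r)
    (hb : ∀ i j, i < j → j < k → (Δ' j).b < (Δ' i).b)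
    (hchain : ∀ i, 3 ≤ i → i + 1 < k → (Δ' (i + 1)).prec (Δ' i))
    (h31 : (Δ' 3).prec (Δ' 1))
    (ha1 : (Δ' 2).a < (Δ' (k - 1)).a) (ha2 : (Δ' (k - 1)).a < (Δ' 0).a)
    (ha3 : (Δ' 0).a < (Δ' (if k = 4 then 1 else k - 2)).a) :
    ¬ GLS k Δ := by
  have Mono : ∀ j, j < k → ∀ i, 3 ≤ i → i ≤ j → (Δ' j).a ≤ (Δ' i).a := by
    intro j
    induction j with
    | zero => intro _ i hi hij; omega
    | succ n ih =>
      intro hn i hi hij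
      rcases Nat.lt_or_ge i (n + 1) with h | h
      · have h1 : (Δ' (n + 1)).a < (Δ' n).a := (hchain n (by omega) hn).1
        have h2 := ih (by omega) i hi (by omega)
        omega
      · have : i = n + 1 := by omega
        subst this; exact le_refl _
  have hA01 : (Δ' 0).a < (Δ' 1).a := by
    by_cases h4 : k = 4
    · rw [if_pos h4] at ha3; exact ha3
    · rw [if_neg h4] at ha3
      have hm := Mono (k - 2) (by omega) 3 (by omega) (by omega)
      have := h31.1
      omega
  have Dord0 : ∀ r, r < k → r ≠ 0 → r ≠ 2 → r ≠ k - 1 → (Δ' 0).a < (Δ' r).a := by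
    intro r hr h0 h2 hk1
    rcases eq_or_ne r 1 with rfl | h1
    · exact hA01
    · have h4 : k ≠ 4 := by omega
      rw [if_neg h4] at ha3
      have hm := Mono (k - 2) (by omega) r (by omega) (by omega)
      omega
  have hA2min : ∀ r, r < k → r ≠ 2 → (Δ' 2).a < (Δ' r).a := by
    intro r hr h2
    have hm31 := h31.1
    have hmk3 := Mono (k - 1) (by omega) 3 (by omega) (by omega)
    rcases eq_or_ne r 0 with rfl | h0
    · omega
    rcases eq_or_ne r 1 with rfl | h1
    · omega
    rcases eq_or_ne r (k - 1) with rfl | hk1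
    · omega
    · have hm := Mono (k - 1) (by omega) r (by omega) (by omega)
      omega
  have hA0b : (Δ' 0).a ≤ (Δ' (k - 1)).b + 1 := by
    by_cases h4 : k = 4
    · have h1 := h31.2.1
      subst h4
      have := hA01
      simp only [show (4:ℕ) - 1 = 3 from rfl]
      omega
    · have h1 := (hchain (k - 2) (by omega) (by omega)).2.1
      rw [show k - 2 + 1 = k - 1 by omega] at h1
      rw [if_neg h4] at ha3
      omega
  have m20 : (Δ' 2).prec (Δ' 0) := by
    have h1 := hA2min 0 (by omega) (by omega)
    have h2 := hb 2 (k - 1) (by omega) (by omega)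
    have h3 := hb 0 2 (by omega) (by omega)
    exact ⟨h1, by omega, h3⟩
  have m21 : (Δ' 2).prec (Δ' 1) := by
    have h1 := hA2min 1 (by omega) (by omega)
    have h2 := h31.2.1
    have h3 := hb 2 3 (by omega) (by omega)
    have h4 := hb 1 2 (by omega) (by omega)
    exact ⟨h1, by omega, h4⟩
  have mk10 : (Δ' (k - 1)).prec (Δ' 0) := by
    have h1 := hb 0 (k - 1) (by omega) (by omega)
    exact ⟨ha2, hA0b, h1⟩
  refine not_gls_of_cycle k Δ Δ' σ (by omega) hσ hΔσ hΔinj hΔ'inj hsurj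
    (fun t => if t = 0 then (2, 0) else if t = 1 then (2, 1) else if t = 2 then (3, 1)
      else if t = k - 1 then (k - 1, 0) else (t + 1, t))
    (fun t => if t = 0 then 1 else if t = 1 then -1 else if t = 2 then 1
      else if t = k - 1 then -1 else 1)
    ?_ ?_ ?_ ?_ ?_ ?_ ?_
  · -- hElt
    intro t ht
    beta_reduce
    split_ifs <;> (try simp) <;> omega
  · -- hEinj
    intro s t hs ht h
    beta_reduce at h
    split_ifs at h <;> simp only [Prod.mk.injEq] at h <;> omega
  · -- hmem
    intro t ht
    beta_reduce
    split_ifs with h0 h1 h2 h3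
    · exact m20
    · exact m21
    · exact h31
    · exact mk10
    · exact hchain t (by omega) (by omega)
  · -- hε
    intro t ht
    beta_reduce
    split_ifs <;> norm_num
  · -- hB'
    intro t ht r' hr' hne h
    obtain ⟨hp1, hp2⟩ := h
    beta_reduce at hne hp1 hp2
    split_ifs at hne hp1 hp2 with h0 h1 h2 h3
    all_goals (
      simp only at hne hp1 hp2
      obtain ⟨q1, q2, q3⟩ := hp1
      obtain ⟨q4, q5, q6⟩ := hp2
      simp only [Segment.shiftl] at q4 q5 q6)
    · -- edge (2,0)
      rcases Nat.lt_or_ge r' 2 with h | h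
      · have := hA01
        interval_cases r' <;> omega
      · rcases eq_or_ne r' 2 with rfl | h2
        · exact hne rfl
        · have := hb 2 r' (by omega) hr'; omega
    · -- edge (2,1)
      rcases Nat.lt_or_ge r' 2 with h | h
      · have := hb 0 1 (by omega) (by omega)
        interval_cases r' <;> omega
      · rcases eq_or_ne r' 2 with rfl | h2
        · exact hne rfl
        · have := hb 2 r' (by omega) hr'; omega
    · -- edge (3,1)
      rcases Nat.lt_or_ge r' 3 with h | h
      · have hx := hb 0 1 (by omega) (by omega)
        have hy := hA2min 3 (by omega) (by omega)
        interval_cases r' <;> omega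
      · rcases eq_or_ne r' 3 with rfl | h3
        · exact hne rfl
        · have := hb 3 r' (by omega) hr'; omega
    · -- edge (k-1,0)
      rcases eq_or_ne r' 0 with rfl | hr0
      · omega
      rcases eq_or_ne r' 2 with rfl | hr2
      · have := hA2min (k - 1) (by omega) (by omega); omega
      · have := Dord0 r' hr' hr0 hr2 hne; omega
    · -- chain edge (t+1,t)
      rcases Nat.lt_or_ge r' t with h | h
      · have := hb r' t h (by omega); omega
      · rcases eq_or_ne r' t with rfl | h'
        · omega
        · have := hb (t + 1) r' (by omega) hr'; omega
  · -- hC'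
    intro t ht s' hs' hne h
    obtain ⟨hp1, hp2⟩ := h
    beta_reduce at hne hp1 hp2
    split_ifs at hne hp1 hp2 with h0 h1 h2 h3
    all_goals (
      simp only at hne hp1 hp2
      obtain ⟨q1, q2, q3⟩ := hp1
      obtain ⟨q4, q5, q6⟩ := hp2
      simp only [Segment.shiftl] at q1 q2 q3)
    · -- edge (2,0)
      rcases eq_or_ne s' 1 with rfl | hs1
      · have := hA01; omega
      rcases eq_or_ne s' 2 with rfl | hs2
      · omega
      rcases eq_or_ne s' (k - 1) with rfl | hsk
      · have := hb 2 (k - 1) (by omega) (by omega); omega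
      · have := Dord0 s' hs' hne hs2 hsk; omega
    · -- edge (2,1)
      rcases Nat.lt_or_ge s' 2 with h | h
      · have := hb 0 1 (by omega) (by omega)
        interval_cases s' <;> omega
      · rcases eq_or_ne s' 2 with rfl | h2
        · omega
        · have := hb 2 s' (by omega) hs'; omega
    · -- edge (3,1)
      rcases Nat.lt_or_ge s' 3 with h | h
      · have hx := hb 0 1 (by omega) (by omega)
        have hy := hA2min 3 (by omega) (by omega)
        interval_cases s' <;> omega
      · rcases eq_or_ne s' 3 with rfl | h3
        · omega
        · have := hb 3 s' (by omega) hs'; omega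
    · -- edge (k-1,0)
      rcases eq_or_ne s' 2 with rfl | hs2
      · have := hA2min (k - 1) (by omega) (by omega); omega
      rcases eq_or_ne s' (k - 1) with rfl | hsk
      · omega
      · have := Dord0 s' hs' hne hs2 hsk; omega
    · -- chain edge (t+1,t)
      rcases Nat.lt_or_ge s' t with h | h
      · have := hb s' t h (by omega); omega
      · rcases eq_or_ne s' (t + 1) with rfl | h'
        · omega
        · rcases Nat.lt_or_ge (t + 1) s' with h'' | h''
          · have := hb (t + 1) s' h'' hs'; omega
          · omega
  · -- hsum
    intro G
    beta_reduce
    have hset : Finset.range k =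
        insert 0 (insert 1 (insert 2 (insert (k - 1) (Finset.Ico 3 (k - 1))))) := by
      ext x
      simp only [Finset.mem_range, Finset.mem_insert, Finset.mem_Ico]
      omega
    rw [hset]
    rw [Finset.sum_insert (by simp only [Finset.mem_insert, Finset.mem_Ico]; omega),
      Finset.sum_insert (by simp only [Finset.mem_insert, Finset.mem_Ico]; omega),
      Finset.sum_insert (by simp only [Finset.mem_insert, Finset.mem_Ico]; omega),
      Finset.sum_insert (by simp only [Finset.mem_Ico]; omega)]
    have hchainsum : ∑ t ∈ Finset.Ico 3 (k - 1),
        (if t = 0 then (1:ℂ) else if t = 1 then -1 else if t = 2 then 1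
          else if t = k - 1 then -1 else 1) •
          (G (if t = 0 then ((2:ℕ), (0:ℕ)) else if t = 1 then (2, 1) else if t = 2 then (3, 1)
            else if t = k - 1 then (k - 1, 0) else (t + 1, t)).1 -
           G (if t = 0 then ((2:ℕ), (0:ℕ)) else if t = 1 then (2, 1) else if t = 2 then (3, 1)
            else if t = k - 1 then (k - 1, 0) else (t + 1, t)).2) =
        ∑ t ∈ Finset.Ico 3 (k - 1), (G (t + 1) - G t) := by
      apply Finset.sum_congr rfl
      intro x hx
      simp only [Finset.mem_Ico] at hx
      rw [if_neg (by omega), if_neg (by omega), if_neg (by omega), if_neg (by omega),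
        if_neg (by omega), if_neg (by omega), if_neg (by omega), if_neg (by omega),
        one_smul]
    rw [hchainsum]
    rw [sum_Ico_tele G 3 (k - 1) (by omega)]
    have hk0 : ¬(k - 1 = 0) := by omega
    have hk1 : ¬(k - 1 = 1) := by omega
    have hk2 : ¬(k - 1 = 2) := by omega
    simp only [if_pos rfl, if_neg hk0, if_neg hk1, if_neg hk2, reduceIte]
    norm_num

lemma mem_msOf {k : ℕ} {Δ : ℕ → Segment} {s : Segment} :
    s ∈ msOf k Δ ↔ ∃ i, i < k ∧ Δ i = s := by
  constructor
  · intro hs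
    simp only [msOf, Multiset.mem_coe, List.mem_map, List.mem_range] at hs
    obtain ⟨i, hi, he⟩ := hs
    exact ⟨i, hi, he⟩
  · rintro ⟨i, hi, rfl⟩
    simp only [msOf, Multiset.mem_coe, List.mem_map, List.mem_range]
    exact ⟨i, hi, rfl⟩

lemma regular_inj (k : ℕ) (Δ : ℕ → Segment) (h : Regular (msOf k Δ)) :
    ∀ s t, s < k → t < k → Δ s = Δ t → s = t := by
  intro s t hs ht hst
  have h1 : (((List.range k).map Δ).map Segment.a).Nodup := by
    have h0 := h.1
    rwa [msOf, Multiset.map_coe, Multiset.coe_nodup] at h0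
  rw [List.map_map] at h1
  have h2 := List.inj_on_of_nodup_map h1
  exact h2 (List.mem_range.mpr hs) (List.mem_range.mpr ht)
    (by simp only [Function.comp_apply, hst])

lemma msOf_card (k : ℕ) (Δ : ℕ → Segment) : Multiset.card (msOf k Δ) = k := by
  rw [msOf, Multiset.coe_card, List.length_map, List.length_range]

theorem statement16 (k : ℕ) (Δ : ℕ → Segment) (hreg : Regular (msOf k Δ))
    (h : Type4231 (msOf k Δ) ∨ Type3412 (msOf k Δ)) :
    ¬ GLS k Δ := by
  have hΔinj := regular_inj k Δ hreg
  rcases h with h | h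
  · obtain ⟨k', Δ', hk4, hm, hreg', hb, hch, h20, ha1, ha2⟩ := h
    have hkk : k' = k := by
      have := msOf_card k Δ
      rw [hm, msOf_card] at this
      omega
    subst hkk
    have hΔ'inj := regular_inj k' Δ' (hm ▸ hreg')
    have hmem1 : ∀ t, ∃ s, t < k' → s < k' ∧ Δ s = Δ' t := by
      intro t
      by_cases ht : t < k'
      · have : Δ' t ∈ msOf k' Δ := by rw [hm]; exact mem_msOf.mpr ⟨t, ht, rfl⟩
        obtain ⟨s, hs, he⟩ := mem_msOf.mp this
        exact ⟨s, fun _ => ⟨hs, he⟩⟩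
      · exact ⟨0, fun hc => absurd hc ht⟩
    choose σ hσ using hmem1
    refine not_gls_4231_case k' Δ Δ' σ hk4 (fun t ht => (hσ t ht).1)
      (fun t ht => (hσ t ht).2) hΔinj hΔ'inj ?_ hb hch h20 ha1 ha2
    intro r hr
    have : Δ r ∈ msOf k' Δ' := by rw [← hm]; exact mem_msOf.mpr ⟨r, hr, rfl⟩
    obtain ⟨r', hr', he⟩ := mem_msOf.mp this
    exact ⟨r', hr', he⟩
  · obtain ⟨k', Δ', hk4, hm, hreg', hb, hch, h31, ha1, ha2, ha3⟩ := h
    have hkk : k' = k := by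
      have := msOf_card k Δ
      rw [hm, msOf_card] at this
      omega
    subst hkk
    have hΔ'inj := regular_inj k' Δ' (hm ▸ hreg')
    have hmem1 : ∀ t, ∃ s, t < k' → s < k' ∧ Δ s = Δ' t := by
      intro t
      by_cases ht : t < k'
      · have : Δ' t ∈ msOf k' Δ := by rw [hm]; exact mem_msOf.mpr ⟨t, ht, rfl⟩
        obtain ⟨s, hs, he⟩ := mem_msOf.mp this
        exact ⟨s, fun _ => ⟨hs, he⟩⟩
      · exact ⟨0, fun hc => absurd hc ht⟩
    choose σ hσ using hmem1
    refine not_gls_3412_case k' Δ Δ' σ hk4 (fun t ht => (hσ t ht).1)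
      (fun t ht => (hσ t ht).2) hΔinj hΔ'inj ?_ hb hch h31 ha1 ha2 ha3
    intro r hr
    have : Δ r ∈ msOf k' Δ' := by rw [← hm]; exact mem_msOf.mpr ⟨r, hr, rfl⟩
    obtain ⟨r', hr', he⟩ := mem_msOf.mp this
    exact ⟨r', hr', he⟩
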